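/- Let E be an exact couple system over a bounded poset I. Then for all p1 ≤ p2 ≤ p3 in I, the triangle E^{p2}_{p1} →(ℓ) E^{p3}_{p1} →(ℓ) E^{p3}_{p2} →(d) E^{p2}_{p1} is exact, where d := j_{p2,p1} ∘ k_{p3,p2}; that is, im(ℓ : E^{p2}_{p1} → E^{p3}_{p1}) = ker(ℓ : E^{p3}_{p1} → E^{p3}_{p2}), im(ℓ : E^{p3}_{p1} → E^{p3}_{p2}) = ker(d), and im(d) = ker(ℓ : E^{p2}_{p1} → E^{p3}_{p1}). -/

import Mathlib

open Function

universe u v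

/-- An exact couple system over a bounded poset `I`: abelian groups `E^p_q` for `q ≤ p`,
functorial maps `ℓ`, boundary maps `k_{pq} : E^p_q → D_q` (where `D_p := E^p_⊥`), exact
triangles `D_q → D_p → E^p_q → D_q`, and naturality of `k`. -/
structure ExactCoupleSystem (I : Type u) [PartialOrder I] [BoundedOrder I] where
  /-- the abelian groups `E^p_q` -/
  E : ∀ p q : I, q ≤ p → AddCommGrpCat.{v}
  /-- the structure maps `ℓ : E^p_q → E^{p'}_{q'}` for `p ≤ p'`, `q ≤ q'` -/
  l : ∀ {p q p' q' : I} (h : q ≤ p) (h' : q' ≤ p'), p ≤ p' → q ≤ q' →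
      (E p q h →+ E p' q' h')
  /-- the boundary maps `k_{pq} : E^p_q → D_q` -/
  k : ∀ {p q : I} (h : q ≤ p), (E p q h →+ E q ⊥ bot_le)
  l_id : ∀ {p q : I} (h : q ≤ p), l h h le_rfl le_rfl = AddMonoidHom.id _
  l_comp : ∀ {p q p' q' p'' q'' : I} (h : q ≤ p) (h' : q' ≤ p') (h'' : q'' ≤ p'')
      (hp : p ≤ p') (hq : q ≤ q') (hp' : p' ≤ p'') (hq' : q' ≤ q''),
      (l h' h'' hp' hq').comp (l h h' hp hq) = l h h'' (hp.trans hp') (hq.trans hq')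
  exact_ij : ∀ {p q : I} (h : q ≤ p),
      (l (bot_le : (⊥ : I) ≤ q) (bot_le : (⊥ : I) ≤ p) h le_rfl).range =
        (l (bot_le : (⊥ : I) ≤ p) h le_rfl bot_le).ker
  exact_jk : ∀ {p q : I} (h : q ≤ p),
      (l (bot_le : (⊥ : I) ≤ p) h le_rfl bot_le).range = (k h).ker
  exact_ki : ∀ {p q : I} (h : q ≤ p),
      (k h).range = (l (bot_le : (⊥ : I) ≤ q) (bot_le : (⊥ : I) ≤ p) h le_rfl).ker
  k_nat : ∀ {p q p' q' : I} (h : q ≤ p) (h' : q' ≤ p') (hp : p ≤ p') (hq : q ≤ q'),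
      (l (bot_le : (⊥ : I) ≤ q) (bot_le : (⊥ : I) ≤ q') hq le_rfl).comp (k h) =
        (k h').comp (l h h' hp hq)

namespace ExactCoupleSystem

variable {I : Type u} [PartialOrder I] [BoundedOrder I] (X : ExactCoupleSystem.{u, v} I)

/-- `D_p := E^p_{−∞}`. -/
abbrev D (p : I) := X.E p ⊥ bot_le

/-- `i_{qp} : D_q → D_p`. -/
def i {q p : I} (h : q ≤ p) : X.D q →+ X.D p := X.l bot_le bot_le h le_rfl

/-- `j_{pq} : D_p → E^p_q`. -/
def j {q p : I} (h : q ≤ p) : X.D p →+ X.E p q h := X.l bot_le h le_rfl bot_le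

/-- The differential `d_{pqz} = j_{qz} ∘ k_{pq} : E^p_q → E^q_z`. -/
def dd {z q p : I} (hzq : z ≤ q) (hqp : q ≤ p) : X.E p q hqp →+ X.E q z hzq :=
  (X.j hzq).comp (X.k hqp)

/-- The S-term `S^{pz}_{bq} = ker(d_{pqz}) / im(d_{bpq})` of an exact couple system. -/
abbrev Sterm {z q p b : I} (hzq : z ≤ q) (hqp : q ≤ p) (hpb : p ≤ b) :=
  ↥(X.dd hzq hqp).ker ⧸ (X.dd hqp hpb).range.addSubgroupOf (X.dd hzq hqp).ker

/-- The class in `S^{pz}_{bq}` of an element `x ∈ ker(d_{pqz})`. -/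
def Scls {z q p b : I} (hzq : z ≤ q) (hqp : q ≤ p) (hpb : p ≤ b)
    {x : X.E p q hqp} (hx : x ∈ (X.dd hzq hqp).ker) : X.Sterm hzq hqp hpb :=
  QuotientAddGroup.mk ⟨x, hx⟩

end ExactCoupleSystem

/-- `E^p_p = 0` in an exact couple system. -/
theorem Epp_eq_zero {I : Type u} [PartialOrder I] [BoundedOrder I]
    (X : ExactCoupleSystem.{u, v} I) {p : I} (h : p ≤ p) (x : X.E p p h) : x = 0 := by
  have hid : X.l (bot_le : (⊥ : I) ≤ p) bot_le h le_rfl = AddMonoidHom.id _ :=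
    X.l_id bot_le
  have hk0 : X.k h x = 0 := by
    have h1 : X.k h x ∈ (X.l (bot_le : (⊥ : I) ≤ p) bot_le h le_rfl).ker := by
      rw [← X.exact_ki h]; exact ⟨x, rfl⟩
    rw [hid] at h1
    simpa using h1
  have hx : x ∈ (X.l (bot_le : (⊥ : I) ≤ p) h le_rfl bot_le).range := by
    rw [X.exact_jk h]; exact hk0
  obtain ⟨z, hz⟩ := hx
  have h2 : z ∈ (X.l (bot_le : (⊥ : I) ≤ p) h le_rfl bot_le).ker := by
    rw [← X.exact_ij h]
    exact ⟨z, by rw [hid]; rfl⟩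
  rw [← hz]
  exact h2

theorem statement9 {I : Type u} [PartialOrder I] [BoundedOrder I]
    (X : ExactCoupleSystem.{u, v} I) {p1 p2 p3 : I} (h12 : p1 ≤ p2) (h23 : p2 ≤ p3) :
    (X.l h12 (h12.trans h23) h23 le_rfl).range =
      (X.l (h12.trans h23) h23 le_rfl h12).ker ∧
    (X.l (h12.trans h23) h23 le_rfl h12).range = (X.dd h12 h23).ker ∧
    (X.dd h12 h23).range = (X.l h12 (h12.trans h23) h23 le_rfl).ker := by
  have h13 : p1 ≤ p3 := h12.trans h23
  -- g ∘ f = 0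
  have hgf : ∀ a : X.E p2 p1 h12,
      X.l h13 h23 le_rfl h12 (X.l h12 h13 h23 le_rfl a) = 0 := by
    intro a
    have e1 := DFunLike.congr_fun (X.l_comp h12 h13 h23 h23 le_rfl le_rfl h12) a
    have e2 := DFunLike.congr_fun
      (X.l_comp h12 (le_refl p2) h23 le_rfl h12 h23 le_rfl) a
    simp only [AddMonoidHom.comp_apply] at e1 e2
    rw [e1, ← e2, Epp_eq_zero X le_rfl (X.l h12 (le_refl p2) le_rfl h12 a), map_zero]
  -- f ∘ j21 = j13 ∘ i23
  have hfj : ∀ w : X.D p2,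
      X.l h12 h13 h23 le_rfl (X.l bot_le h12 le_rfl bot_le w)
        = X.l bot_le h13 le_rfl bot_le (X.l bot_le bot_le h23 le_rfl w) := by
    intro w
    have e1 := DFunLike.congr_fun (X.l_comp bot_le h12 h13 le_rfl bot_le h23 le_rfl) w
    have e2 := DFunLike.congr_fun (X.l_comp bot_le bot_le h13 h23 le_rfl le_rfl bot_le) w
    simp only [AddMonoidHom.comp_apply] at e1 e2
    exact e1.trans e2.symm
  -- g ∘ j13 = j23
  have hgj : ∀ z : X.D p3,
      X.l h13 h23 le_rfl h12 (X.l bot_le h13 le_rfl bot_le z)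
        = X.l bot_le h23 le_rfl bot_le z := by
    intro z
    have e := DFunLike.congr_fun (X.l_comp bot_le h13 h23 le_rfl bot_le le_rfl h12) z
    simp only [AddMonoidHom.comp_apply] at e
    exact e
  -- k3 ∘ f = k2
  have hkf : ∀ a : X.E p2 p1 h12,
      X.k h13 (X.l h12 h13 h23 le_rfl a) = X.k h12 a := by
    intro a
    have e := DFunLike.congr_fun (X.k_nat h12 h13 h23 le_rfl) a
    have hid : X.l (bot_le : (⊥ : I) ≤ p1) bot_le le_rfl le_rfl = AddMonoidHom.id _ :=
      X.l_id bot_le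
    simp only [AddMonoidHom.comp_apply, hid, AddMonoidHom.id_apply] at e
    exact e.symm
  -- K ∘ g = i12 ∘ k3
  have hkg : ∀ x : X.E p3 p1 h13,
      X.k h23 (X.l h13 h23 le_rfl h12 x)
        = X.l bot_le bot_le h12 le_rfl (X.k h13 x) := by
    intro x
    have e := DFunLike.congr_fun (X.k_nat h13 h23 le_rfl h12) x
    simp only [AddMonoidHom.comp_apply] at e
    exact e.symm
  -- i23 ∘ i12 = i13
  have hii : ∀ y : X.D p1,
      X.l bot_le bot_le h23 le_rfl (X.l bot_le bot_le h12 le_rfl y)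
        = X.l bot_le bot_le h13 le_rfl y := by
    intro y
    have e := DFunLike.congr_fun (X.l_comp bot_le bot_le bot_le h12 le_rfl h23 le_rfl) y
    simp only [AddMonoidHom.comp_apply] at e
    exact e
  -- j21 ∘ i12 = 0
  have hji : ∀ u : X.D p1,
      X.l bot_le h12 le_rfl bot_le (X.l bot_le bot_le h12 le_rfl u) = 0 := by
    intro u
    have : X.l bot_le bot_le h12 le_rfl u
        ∈ (X.l (bot_le : (⊥ : I) ≤ p2) h12 le_rfl bot_le).ker := by
      rw [← X.exact_ij h12]; exact ⟨u, rfl⟩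
    exact this
  -- i23 ∘ K = 0
  have hik : ∀ c : X.E p3 p2 h23,
      X.l bot_le bot_le h23 le_rfl (X.k h23 c) = 0 := by
    intro c
    have : X.k h23 c ∈ (X.l (bot_le : (⊥ : I) ≤ p2) bot_le h23 le_rfl).ker := by
      rw [← X.exact_ki h23]; exact ⟨c, rfl⟩
    exact this
  refine ⟨?_, ?_, ?_⟩
  · ext x
    simp only [AddMonoidHom.mem_range, AddMonoidHom.mem_ker]
    constructor
    · rintro ⟨a, rfl⟩
      exact hgf a
    · intro hx
      have h1 : X.k h13 x
          ∈ (X.l (bot_le : (⊥ : I) ≤ p1) bot_le h12 le_rfl).ker := by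
        show X.l bot_le bot_le h12 le_rfl (X.k h13 x) = 0
        rw [← hkg x, hx, map_zero]
      rw [← X.exact_ki h12] at h1
      obtain ⟨a, ha⟩ := h1
      have h3 : x - X.l h12 h13 h23 le_rfl a ∈ (X.k h13).ker := by
        show X.k h13 (x - X.l h12 h13 h23 le_rfl a) = 0
        rw [map_sub, hkf a, ha, sub_self]
      rw [← X.exact_jk h13] at h3
      obtain ⟨z, hz⟩ := h3
      have h4 : z ∈ (X.l (bot_le : (⊥ : I) ≤ p3) h23 le_rfl bot_le).ker := by
        show X.l bot_le h23 le_rfl bot_le z = 0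
        rw [← hgj z, hz, map_sub, hx, hgf a, sub_zero]
      rw [← X.exact_ij h23] at h4
      obtain ⟨w, hw⟩ := h4
      refine ⟨a + X.l bot_le h12 le_rfl bot_le w, ?_⟩
      rw [map_add, hfj w, hw, hz]
      abel
  · ext x
    simp only [AddMonoidHom.mem_range, AddMonoidHom.mem_ker]
    constructor
    · rintro ⟨b, rfl⟩
      show X.l bot_le h12 le_rfl bot_le (X.k h23 (X.l h13 h23 le_rfl h12 b)) = 0
      rw [hkg b, hji (X.k h13 b)]
    · intro hx
      have h1 : X.k h23 x ∈ (X.l (bot_le : (⊥ : I) ≤ p2) h12 le_rfl bot_le).ker := hx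
      rw [← X.exact_ij h12] at h1
      obtain ⟨y, hy⟩ := h1
      have h2 : y ∈ (X.l (bot_le : (⊥ : I) ≤ p1) bot_le h13 le_rfl).ker := by
        show X.l bot_le bot_le h13 le_rfl y = 0
        rw [← hii y, hy, hik x]
      rw [← X.exact_ki h13] at h2
      obtain ⟨b, hb⟩ := h2
      have h3 : x - X.l h13 h23 le_rfl h12 b ∈ (X.k h23).ker := by
        show X.k h23 (x - X.l h13 h23 le_rfl h12 b) = 0
        rw [map_sub, hkg b, hb, hy, sub_self]
      rw [← X.exact_jk h23] at h3
      obtain ⟨z, hz⟩ := h3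
      refine ⟨b + X.l bot_le h13 le_rfl bot_le z, ?_⟩
      rw [map_add, hgj z, hz]
      abel
  · ext a
    simp only [AddMonoidHom.mem_range, AddMonoidHom.mem_ker]
    constructor
    · rintro ⟨c, rfl⟩
      show X.l h12 h13 h23 le_rfl
        (X.l bot_le h12 le_rfl bot_le (X.k h23 c)) = 0
      rw [hfj (X.k h23 c), hik c, map_zero]
    · intro ha
      have h1 : a ∈ (X.k h12).ker := by
        show X.k h12 a = 0
        rw [← hkf a, ha, map_zero]
      rw [← X.exact_jk h12] at h1
      obtain ⟨y, hy⟩ := h1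
      have h2 : X.l bot_le bot_le h23 le_rfl y
          ∈ (X.l (bot_le : (⊥ : I) ≤ p3) h13 le_rfl bot_le).ker := by
        show X.l bot_le h13 le_rfl bot_le (X.l bot_le bot_le h23 le_rfl y) = 0
        rw [← hfj y, hy, ha]
      rw [← X.exact_ij h13] at h2
      obtain ⟨u, hu⟩ := h2
      have h3 : y - X.l bot_le bot_le h12 le_rfl u
          ∈ (X.l (bot_le : (⊥ : I) ≤ p2) bot_le h23 le_rfl).ker := by
        show X.l bot_le bot_le h23 le_rfl (y - X.l bot_le bot_le h12 le_rfl u) = 0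
        rw [map_sub, hii u, hu, sub_self]
      rw [← X.exact_ki h23] at h3
      obtain ⟨c, hc⟩ := h3
      refine ⟨c, ?_⟩
      show X.l bot_le h12 le_rfl bot_le (X.k h23 c) = a
      rw [hc, map_sub, hji u, sub_zero, hy]
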